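/- Let R be an ℕ-graded domain of Krull dimension 2, finitely generated as an algebra over its degree-0 component R_0, where R_0 is an algebraically closed field k. Suppose x ∈ R_d is a prime element for some d > 0, and suppose the induced grading on R/xR is irredundant, i.e., gcd{n ∈ ℕ : (R/xR)_n ≠ 0} = 1. Then there exists N such that for all n ≥ N, dim_k R_{n+d} = 1 + dim_k R_n. -/

import Mathlib

-- Part B: numerical semigroup lemma
lemma semigroup_cofinite (S : Set ℕ) (h0 : 0 ∈ S) (hadd : ∀ a ∈ S, ∀ b ∈ S, a + b ∈ S)
    (hgcd : ∀ m : ℕ, (∀ n ∈ S, m ∣ n) → m = 1) : ∃ N, ∀ n, N ≤ n → n ∈ S := by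
  have hmul : ∀ (j a : ℕ), a ∈ S → j * a ∈ S := by
    intro j a ha
    induction j with
    | zero => simpa using h0
    | succ j ih => rw [add_mul, one_mul]; exact hadd _ ih _ ha
  set T : AddSubgroup ℤ := AddSubgroup.closure ((↑) '' S)
  obtain ⟨g, hg⟩ := Int.subgroup_cyclic T
  have hdvd : ∀ n ∈ S, g.natAbs ∣ n := by
    intro n hn
    have hnT : (n : ℤ) ∈ T := AddSubgroup.subset_closure ⟨n, hn, rfl⟩
    rw [hg, AddSubgroup.mem_closure_singleton] at hnT
    obtain ⟨z, hz⟩ := hnT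
    have : g ∣ (n : ℤ) := Dvd.intro_left z (by rw [← hz, smul_eq_mul])
    exact Int.natAbs_dvd_natAbs.mpr (by simpa using this)
  have hg1 : g.natAbs = 1 := hgcd _ hdvd
  have h1T : (1 : ℤ) ∈ T := by
    have hgT : g ∈ T := by rw [hg]; exact AddSubgroup.subset_closure rfl
    rcases Int.natAbs_eq g with h | h
    · rw [hg1] at h; rw [h] at hgT; simpa using hgT
    · rw [hg1] at h
      have := T.neg_mem hgT
      rw [h] at this; simpa using this
  have hdiff : ∀ t ∈ T, ∃ p ∈ S, ∃ q ∈ S, t = (p : ℤ) - q := by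
    intro t ht
    induction ht using AddSubgroup.closure_induction with
    | mem s hs => obtain ⟨p, hp, rfl⟩ := hs; exact ⟨p, hp, 0, h0, by simp⟩
    | zero => exact ⟨0, h0, 0, h0, by simp⟩
    | add a b _ _ iha ihb =>
        obtain ⟨p, hp, q, hq, rfl⟩ := iha
        obtain ⟨p', hp', q', hq', rfl⟩ := ihb
        exact ⟨p + p', hadd _ hp _ hp', q + q', hadd _ hq _ hq', by push_cast; ring⟩
    | neg a _ iha =>
        obtain ⟨p, hp, q, hq, rfl⟩ := iha
        exact ⟨q, hq, p, hp, by ring⟩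
  obtain ⟨p, hp, q, hq, hpq⟩ := hdiff 1 h1T
  have hp1 : p = q + 1 := by omega
  subst hp1
  rcases Nat.eq_zero_or_pos q with rfl | hqpos
  · exact ⟨0, fun n _ => by simpa using hmul n 1 (by simpa using hp)⟩
  · refine ⟨q * q, fun n hn => ?_⟩
    have hr : n % q < q := Nat.mod_lt _ hqpos
    have hs : q ≤ n / q := (Nat.le_div_iff_mul_le hqpos).mpr hn
    have hrep : n = (n % q) * (q + 1) + (n / q - n % q) * q := by
      have h2 : n / q = n % q + (n / q - n % q) := by omega
      calc n = q * (n / q) + n % q := (Nat.div_add_mod n q).symm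
        _ = q * (n % q + (n / q - n % q)) + n % q := by rw [← h2]
        _ = (n % q) * (q + 1) + (n / q - n % q) * q := by ring
    rw [hrep]
    exact hadd _ (hmul _ _ hp) _ (hmul _ _ hq)
open DirectSum

-- key degree computation: degree-n part of the ideal generated by a subspace V ≤ 𝒜 n is V
lemma span_cap_deg {k R : Type*} [Field k] [CommRing R] [Algebra k R]
    (𝒜 : ℕ → Submodule k R) [GradedAlgebra 𝒜]
    (h0 : 𝒜 0 = Submodule.span k {1}) (n : ℕ) (V : Submodule k R) (hV : V ≤ 𝒜 n)
    (r : R) (hr : r ∈ 𝒜 n) (hrs : r ∈ Ideal.span (V : Set R)) : r ∈ V := by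
  rw [Ideal.span, Submodule.mem_span_set] at hrs
  obtain ⟨c, hsupp, hsum⟩ := hrs
  have key : ∀ v ∈ c.support, (decompose 𝒜 (c v • v) n : R) ∈ V := by
    intro v hv
    have hvV : v ∈ V := hsupp hv
    have hgi : v ∈ 𝒜 n := hV hvV
    have heq : (decompose 𝒜 (c v * v) (0 + n) : R)
        = (decompose 𝒜 (c v) 0 : R) * v :=
      coe_decompose_mul_add_of_right_mem 𝒜 hgi
    rw [zero_add] at heq
    rw [smul_eq_mul, heq]
    have h00 : (decompose 𝒜 (c v) 0 : R) ∈ Submodule.span k {(1 : R)} := by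
      rw [← h0]; exact (decompose 𝒜 (c v) 0).2
    obtain ⟨a, ha⟩ := Submodule.mem_span_singleton.mp h00
    rw [← ha, smul_mul_assoc, one_mul]
    exact V.smul_mem a hvV
  have hsum2 : (decompose 𝒜 r n : R) ∈ V := by
    rw [← hsum, Finsupp.sum, ← GradedRing.proj_apply, map_sum]
    exact V.sum_mem fun v hv => by rw [GradedRing.proj_apply]; exact key v hv
  rwa [decompose_of_mem_same 𝒜 hr] at hsum2

lemma graded_piece_fd {k R : Type*} [Field k] [CommRing R] [Algebra k R]
    (𝒜 : ℕ → Submodule k R) [GradedAlgebra 𝒜]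
    (h0 : 𝒜 0 = Submodule.span k {1}) (hft : Algebra.FiniteType k R) (n : ℕ) :
    FiniteDimensional k (𝒜 n) := by
  haveI : IsNoetherianRing R := Algebra.FiniteType.isNoetherianRing k R
  have hmono : StrictMono (fun W : Submodule k (𝒜 n) =>
      Ideal.span ((𝒜 n).subtype '' (W : Set (𝒜 n)))) := by
    intro W1 W2 hW
    refine lt_of_le_of_ne (Ideal.span_mono (Set.image_mono hW.le)) ?_
    intro heq
    obtain ⟨w, hw2, hw1⟩ := SetLike.exists_of_lt hW
    have heq2 : Ideal.span ((𝒜 n).subtype '' (W1 : Set (𝒜 n)))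
        = Ideal.span ((𝒜 n).subtype '' (W2 : Set (𝒜 n))) := heq
    have hmem : (w : R) ∈ Ideal.span ((𝒜 n).subtype '' (W1 : Set (𝒜 n))) := by
      rw [heq2]
      exact Ideal.subset_span ⟨w, hw2, rfl⟩
    have himg : ((𝒜 n).subtype '' (W1 : Set (𝒜 n))) = ((Submodule.map (𝒜 n).subtype W1 : Submodule k R) : Set R) := by
      simp [Submodule.map_coe]
    rw [himg] at hmem
    have := span_cap_deg 𝒜 h0 n (Submodule.map (𝒜 n).subtype W1)
      (Submodule.map_subtype_le _ _) w w.2 hmem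
    obtain ⟨w', hw', hww⟩ := Submodule.mem_map.mp this
    exact hw1 (by rwa [show w' = w from Subtype.ext hww] at hw')
  haveI : WellFoundedGT (Submodule k (𝒜 n)) := hmono.wellFoundedGT
  haveI : IsNoetherian k (𝒜 n) := isNoetherian_iff'.mpr inferInstance
  exact IsNoetherian.iff_fg.mp inferInstance
open DirectSum

section PartA
variable {k R : Type*} [Field k] [IsAlgClosed k] [CommRing R] [IsDomain R] [Algebra k R]
  (𝒜 : ℕ → Submodule k R) [GradedAlgebra 𝒜]

-- the irrelevant ideal is prime when 𝒜 0 = k·1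
lemma irrelevant_isPrime (h0 : 𝒜 0 = Submodule.span k {1}) :
    (HomogeneousIdeal.irrelevant 𝒜).toIdeal.IsPrime := by
  have hinj : ∀ c : k, c • (1 : R) = 0 → c = 0 := by
    intro c hc
    rw [← Algebra.algebraMap_eq_smul_one] at hc
    exact (algebraMap k R).injective (by simpa using hc)
  have hsm : ∀ r : R, ∃ c : k, c • (1 : R) = GradedRing.projZeroRingHom 𝒜 r := by
    intro r
    refine Submodule.mem_span_singleton.mp ?_
    rw [← h0]
    exact (decompose 𝒜 r 0).2
  have hproj : ∀ r : R, (r ∈ (HomogeneousIdeal.irrelevant 𝒜).toIdeal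
      ↔ GradedRing.projZeroRingHom 𝒜 r = 0) := by
    intro r
    rw [HomogeneousIdeal.mem_iff, HomogeneousIdeal.mem_irrelevant_iff, GradedRing.proj_apply]
    rfl
  constructor
  · intro htop
    have h1 : (1 : R) ∈ (HomogeneousIdeal.irrelevant 𝒜).toIdeal := htop ▸ Submodule.mem_top
    rw [hproj, map_one] at h1
    exact one_ne_zero h1
  · intro a b hab
    rw [hproj, map_mul] at hab
    rw [hproj a, hproj b]
    obtain ⟨ca, hca⟩ := hsm a
    obtain ⟨cb, hcb⟩ := hsm b
    rw [← hca, ← hcb, smul_mul_assoc, mul_smul_comm, smul_smul, mul_one] at hab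
    rcases mul_eq_zero.mp (hinj _ hab) with h | h
    · left; rw [← hca, h, zero_smul]
    · right; rw [← hcb, h, zero_smul]

end PartA

section Brick
variable {k R : Type*} [Field k] [IsAlgClosed k] [CommRing R] [IsDomain R] [Algebra k R]
  (𝒜 : ℕ → Submodule k R) [GradedAlgebra 𝒜]

/-- If `Q` is a prime containing `x` and a homogeneous `w ∉ (x)` of positive degree,
then `Q` contains every homogeneous `u` of positive degree -- else we get a chain of
primes of length 3. -/
lemma brick (h0 : 𝒜 0 = Submodule.span k {1}) (hdim : ringKrullDim R = 2)
    {d : ℕ} {x : R} (hxd : x ∈ 𝒜 d) (hx : Prime x)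
    {m m' : ℕ} (hm : 0 < m') {u : R} (hu : u ∈ 𝒜 m') {w : R} (hwm : w ∈ 𝒜 m)
    (hwI : w ∉ Ideal.span {x})
    (Q : Ideal R) (hQ : Q.IsPrime) (hxQ : x ∈ Q) (hwQ : w ∈ Q) : u ∈ Q := by
  have hI : (Ideal.span {x}).IsPrime := (Ideal.span_singleton_prime hx.ne_zero).mpr hx
  set Qc := Q.homogeneousCore 𝒜 with hQcdef
  have hQcp : Qc.toIdeal.IsPrime := hQ.homogeneousCore
  refine Ideal.toIdeal_homogeneousCore_le 𝒜 Q ?_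
  by_contra hucore
  -- x and w are in the homogeneous core
  have hxQc : x ∈ Qc.toIdeal :=
    Ideal.mem_homogeneousCore_of_homogeneous_of_mem ⟨d, hxd⟩ hxQ
  have hwQc : w ∈ Qc.toIdeal :=
    Ideal.mem_homogeneousCore_of_homogeneous_of_mem ⟨m, hwm⟩ hwQ
  -- the homogeneous core is contained in the irrelevant ideal
  have hQcIrr : Qc.toIdeal ≤ (HomogeneousIdeal.irrelevant 𝒜).toIdeal := by
    intro a ha
    have hd0 : (decompose 𝒜 a 0 : R) ∈ Qc.toIdeal := Qc.isHomogeneous 0 ha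
    have hd0' : (decompose 𝒜 a 0 : R) ∈ Submodule.span k {(1 : R)} := by
      rw [← h0]; exact (decompose 𝒜 a 0).2
    obtain ⟨c, hc⟩ := Submodule.mem_span_singleton.mp hd0'
    have hc0 : c = 0 := by
      by_contra hc0
      have hunit : IsUnit ((decompose 𝒜 a 0 : R)) := by
        rw [← hc, ← Algebra.algebraMap_eq_smul_one]
        exact (IsUnit.mk0 c hc0).map (algebraMap k R)
      exact hQcp.ne_top (Ideal.eq_top_of_isUnit_mem _ hd0 hunit)
    rw [HomogeneousIdeal.mem_iff, HomogeneousIdeal.mem_irrelevant_iff, GradedRing.proj_apply]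
    rw [← hc, hc0, zero_smul]
  have huIrr : u ∈ (HomogeneousIdeal.irrelevant 𝒜).toIdeal := by
    rw [HomogeneousIdeal.mem_iff, HomogeneousIdeal.mem_irrelevant_iff, GradedRing.proj_apply]
    exact decompose_of_mem_ne 𝒜 hu hm.ne'
  -- build the chain of primes
  let P0 : PrimeSpectrum R := ⟨⊥, Ideal.bot_prime⟩
  let P1 : PrimeSpectrum R := ⟨Ideal.span {x}, hI⟩
  let P2 : PrimeSpectrum R := ⟨Qc.toIdeal, hQcp⟩
  let P3 : PrimeSpectrum R := ⟨(HomogeneousIdeal.irrelevant 𝒜).toIdeal, irrelevant_isPrime 𝒜 h0⟩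
  have l01 : P0 < P1 := by
    show (⊥ : Ideal R) < Ideal.span {x}
    refine lt_of_le_of_ne bot_le fun h => ?_
    exact hx.ne_zero (Ideal.span_singleton_eq_bot.mp h.symm)
  have l12 : P1 < P2 := by
    show Ideal.span {x} < Qc.toIdeal
    refine lt_of_le_of_ne (by rwa [Ideal.span_singleton_le_iff_mem]) fun h => ?_
    exact hwI (h ▸ hwQc)
  have l23 : P2 < P3 := by
    show Qc.toIdeal < (HomogeneousIdeal.irrelevant 𝒜).toIdeal
    refine lt_of_le_of_ne hQcIrr fun h => ?_
    exact hucore (h ▸ huIrr)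
  let ch : LTSeries (PrimeSpectrum R) :=
    RelSeries.fromListIsChain [P0, P1, P2, P3] (by simp)
      (by simp [List.isChain_cons_cons, l01, l12, l23])
  have hlen := Order.LTSeries.length_le_krullDim ch
  have hlen3 : ch.length = 3 := by simp [ch, RelSeries.fromListIsChain]
  rw [hlen3] at hlen
  rw [show Order.krullDim (PrimeSpectrum R) = ringKrullDim R from rfl, hdim] at hlen
  norm_num at hlen

end Brick

section PartAMain
variable {k R : Type*} [Field k] [IsAlgClosed k] [CommRing R] [IsDomain R] [Algebra k R]
  (𝒜 : ℕ → Submodule k R) [GradedAlgebra 𝒜]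

lemma partA (h0 : 𝒜 0 = Submodule.span k {1}) (hft : Algebra.FiniteType k R)
    (hdim : ringKrullDim R = 2)
    {d : ℕ} {x : R} (hxd : x ∈ 𝒜 d) (hx : Prime x)
    {m : ℕ} (hm : 0 < m) {u v : R} (hu : u ∈ 𝒜 m) (hv : v ∈ 𝒜 m)
    (huI : u ∉ Ideal.span {x}) :
    ∃ c : k, v - c • u ∈ Ideal.span {x} := by
  set I := Ideal.span {x} with hIdef
  haveI hI : I.IsPrime := (Ideal.span_singleton_prime hx.ne_zero).mpr hx
  haveI : Algebra.FiniteType k (R ⧸ I) :=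
    by haveI := hft; exact Algebra.FiniteType.of_surjective (Ideal.Quotient.mkₐ k I) (Ideal.Quotient.mkₐ_surjective k I)
  haveI : IsJacobsonRing (R ⧸ I) := isJacobsonRing_of_finiteType (A := k)
  set ub : R ⧸ I := Ideal.Quotient.mk I u with hubdef
  have hub : ub ≠ 0 := fun h => huI (Ideal.Quotient.eq_zero_iff_mem.mp h)
  -- find a maximal ideal avoiding ub
  have hjac : ((⊥ : Ideal (R ⧸ I)).jacobson : Ideal (R ⧸ I)) = ⊥ := by
    rw [← Ideal.radical_eq_jacobson, Ideal.radical_bot_of_noZeroDivisors]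
  have hnot : ¬ ub ∈ ((⊥ : Ideal (R ⧸ I)).jacobson : Ideal (R ⧸ I)) := by
    rw [hjac]; exact hub
  rw [Ideal.jacobson, Ideal.mem_sInf] at hnot
  push_neg at hnot
  obtain ⟨J, ⟨-, hJmax⟩, hubJ⟩ := hnot
  haveI := hJmax
  -- the residue field
  haveI : Algebra.FiniteType k ((R ⧸ I) ⧸ J) :=
    Algebra.FiniteType.of_surjective
      (Ideal.Quotient.mkₐ k J) (Ideal.Quotient.mkₐ_surjective k J)
  letI : Field ((R ⧸ I) ⧸ J) := Ideal.Quotient.field J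
  haveI := finite_of_finite_type_of_isJacobsonRing k ((R ⧸ I) ⧸ J)
  haveI : Algebra.IsIntegral k ((R ⧸ I) ⧸ J) := Algebra.IsIntegral.of_finite k _
  have hsurj : Function.Surjective (algebraMap k ((R ⧸ I) ⧸ J)) :=
    IsAlgClosed.algebraMap_bijective_of_isIntegral.2
  set a : (R ⧸ I) ⧸ J := Ideal.Quotient.mk J ub with hadef
  set b : (R ⧸ I) ⧸ J := Ideal.Quotient.mk J (Ideal.Quotient.mk I v) with hbdef
  have ha : a ≠ 0 := fun h => hubJ (Ideal.Quotient.eq_zero_iff_mem.mp h)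
  obtain ⟨ca, hca⟩ := hsurj a
  obtain ⟨cb, hcb⟩ := hsurj b
  have hca0 : ca ≠ 0 := by
    rintro rfl
    rw [map_zero] at hca
    exact ha hca.symm
  refine ⟨cb / ca, ?_⟩
  by_contra hwI
  set w : R := v - (cb / ca) • u with hwdef
  have hwm : w ∈ 𝒜 m := Submodule.sub_mem _ hv (Submodule.smul_mem _ _ hu)
  haveI := hJmax.isPrime
  set Q : Ideal R := J.comap (Ideal.Quotient.mk I) with hQdef
  haveI hQp : Q.IsPrime := inferInstance
  have hxQ : x ∈ Q := by
    show Ideal.Quotient.mk I x ∈ J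
    rw [Ideal.Quotient.eq_zero_iff_mem.mpr (Ideal.mem_span_singleton_self x)]
    exact Submodule.zero_mem _
  have huQ : u ∉ Q := hubJ
  have hwQ : w ∉ Q := fun hwQ => huQ (brick 𝒜 h0 hdim hxd hx hm hu hwm hwI Q hQp hxQ hwQ)
  have hwzero : Ideal.Quotient.mk J (Ideal.Quotient.mk I w) = 0 := by
    rw [hwdef]
    have hsmul : ((cb / ca) • u : R) = algebraMap k R (cb / ca) * u := by
      rw [Algebra.algebraMap_eq_smul_one, smul_mul_assoc, one_mul]
    rw [map_sub, map_sub, hsmul, map_mul, map_mul]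
    have halg : Ideal.Quotient.mk J (Ideal.Quotient.mk I (algebraMap k R (cb / ca)))
        = algebraMap k ((R ⧸ I) ⧸ J) (cb / ca) := by
      rw [IsScalarTower.algebraMap_apply k (R ⧸ I) ((R ⧸ I) ⧸ J),
        IsScalarTower.algebraMap_apply k R (R ⧸ I)]
      rfl
    rw [halg, ← hbdef, ← hadef, ← hca, ← hcb, ← map_mul, ← map_sub,
      div_mul_cancel₀ cb hca0, sub_self, map_zero]
  exact hwQ (show Ideal.Quotient.mk I w ∈ J from Ideal.Quotient.eq_zero_iff_mem.mp hwzero)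

end PartAMain

/-- Let `R` be an ℕ-graded domain of Krull dimension 2, finitely
generated over `R₀ = k` an algebraically closed field.  If `x ∈ R_d` (`d > 0`) is a
prime element and the induced grading on `R/xR` is irredundant (the gcd of the degrees
`n` with `(R/xR)_n ≠ 0` is 1), then `dim_k R_{n+d} = 1 + dim_k R_n` for all `n ≫ 0`. -/
theorem stmt_19 {k R : Type*} [Field k] [IsAlgClosed k] [CommRing R] [IsDomain R]
    [Algebra k R]
    (𝒜 : ℕ → Submodule k R) [GradedAlgebra 𝒜]
    (h0 : 𝒜 0 = Submodule.span k {1})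
    (hft : Algebra.FiniteType k R)
    (hdim : ringKrullDim R = 2)
    (d : ℕ) (hd : 0 < d) (x : R) (hxd : x ∈ 𝒜 d) (hx : Prime x)
    (hirr : ∀ m : ℕ, (∀ n : ℕ, (∃ r ∈ 𝒜 n, r ∉ Ideal.span {x}) → m ∣ n) → m = 1) :
    ∃ N : ℕ, ∀ n : ℕ, N ≤ n →
      Module.finrank k (𝒜 (n + d)) = 1 + Module.finrank k (𝒜 n) := by
  classical
  set I := Ideal.span {x} with hIdef
  haveI hI : I.IsPrime := (Ideal.span_singleton_prime hx.ne_zero).mpr hx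
  haveI fd : ∀ n : ℕ, FiniteDimensional k (𝒜 n) := fun n => graded_piece_fd 𝒜 h0 hft n
  obtain ⟨N, hN⟩ := semigroup_cofinite {n : ℕ | ∃ r ∈ 𝒜 n, r ∉ I}
    ⟨1, SetLike.GradedOne.one_mem, (Ideal.ne_top_iff_one I).mp hI.ne_top⟩
    (fun a ⟨r, hr, hrI⟩ b ⟨s, hs, hsI⟩ =>
      ⟨r * s, SetLike.mul_mem_graded hr hs, fun hmem => (hI.mem_or_mem hmem).elim hrI hsI⟩)
    (fun m hm => hirr m (fun n hn => hm n hn))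
  refine ⟨N, fun n hn => ?_⟩
  haveI := fd n; haveI := fd (n + d)
  obtain ⟨w0, hw0m, hw0I⟩ := hN (n + d) (le_trans hn (Nat.le_add_right n d))
  let mkA := Ideal.Quotient.mkₐ k I
  let f : 𝒜 n →ₗ[k] 𝒜 (n + d) :=
    { toFun := fun r => ⟨(r : R) * x, SetLike.mul_mem_graded r.2 hxd⟩
      map_add' := fun r s => Subtype.ext (by simp [add_mul])
      map_smul' := fun c r => Subtype.ext (by simp [smul_mul_assoc]) }
  let g : 𝒜 (n + d) →ₗ[k] (R ⧸ I) := mkA.toLinearMap.comp (𝒜 (n + d)).subtype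
  have hfinj : Function.Injective f := by
    intro r s h
    have h2 : (r : R) * x = (s : R) * x := congrArg Subtype.val h
    exact Subtype.ext (mul_right_cancel₀ hx.ne_zero h2)
  have hgapp : ∀ r : 𝒜 (n + d), g r = Ideal.Quotient.mk I (r : R) := fun r => rfl
  have hker : LinearMap.ker g = LinearMap.range f := by
    ext r
    rw [LinearMap.mem_ker, LinearMap.mem_range]
    constructor
    · intro hr
      have hrI : (r : R) ∈ I := Ideal.Quotient.eq_zero_iff_mem.mp (by rw [← hgapp]; exact hr)
      obtain ⟨y, hy⟩ := Ideal.mem_span_singleton'.mp hrI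
      refine ⟨⟨(DirectSum.decompose 𝒜 y n : R), (DirectSum.decompose 𝒜 y n).2⟩, ?_⟩
      apply Subtype.ext
      show (DirectSum.decompose 𝒜 y n : R) * x = (r : R)
      have hc : (DirectSum.decompose 𝒜 (y * x) (n + d) : R)
          = (DirectSum.decompose 𝒜 y n : R) * x :=
        DirectSum.coe_decompose_mul_add_of_right_mem 𝒜 hxd
      rw [← hc, hy, DirectSum.decompose_of_mem_same 𝒜 r.2]
    · rintro ⟨s, rfl⟩
      rw [hgapp]
      exact Ideal.Quotient.eq_zero_iff_mem.mpr
        (Ideal.mem_span_singleton.mpr (dvd_mul_left x (s : R)))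
  have hw0ne : Ideal.Quotient.mk I w0 ≠ 0 := fun h => hw0I (Ideal.Quotient.eq_zero_iff_mem.mp h)
  have hrange : LinearMap.range g = Submodule.span k {Ideal.Quotient.mk I w0} := by
    apply le_antisymm
    · rintro _ ⟨⟨v, hv⟩, rfl⟩
      obtain ⟨c, hc⟩ := partA 𝒜 h0 hft hdim hxd hx (show 0 < n + d by omega) hw0m hv hw0I
      refine Submodule.mem_span_singleton.mpr ⟨c, ?_⟩
      have h2 : Ideal.Quotient.mk I (v - c • w0) = 0 := Ideal.Quotient.eq_zero_iff_mem.mpr hc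
      have h3 : mkA (v - c • w0) = 0 := h2
      rw [map_sub, map_smul, sub_eq_zero] at h3
      exact h3.symm
    · rw [Submodule.span_le, Set.singleton_subset_iff]
      exact ⟨⟨w0, hw0m⟩, rfl⟩
  have hrg : Module.finrank k (LinearMap.range g) = 1 := by
    rw [hrange]
    exact finrank_span_singleton hw0ne
  have hkf : Module.finrank k (LinearMap.ker g) = Module.finrank k (𝒜 n) := by
    rw [hker]
    exact LinearMap.finrank_range_of_inj hfinj
  have hrn := LinearMap.finrank_range_add_finrank_ker g
  rw [hrg, hkf] at hrn
  omega
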